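/- For all real t and all x in (0, π], the function f(x,t) = 2e^t·arctan(e^{-t}·sin(x/2)) satisfies Lf(x,t) ≥ 0, where Lf = ((f')² − 1)/f'' − f − ∂f/∂t and f' , f'' denote first and second derivatives of f with respect to x. -/

import Mathlib

open Real

/-- The comparison function `f(x,t) = 2 eᵗ arctan(e⁻ᵗ sin(x/2))`. -/
noncomputable def compFun (x t : ℝ) : ℝ :=
  2 * Real.exp t * Real.arctan (Real.exp (-t) * Real.sin (x / 2))

lemma arctan_pade (v : ℝ) (hv : 0 ≤ v) :
    Real.arctan v ≤ v * (v ^ 2 + 3) / (2 * v ^ 2 + 3) := by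
  have key : ∀ z : ℝ, HasDerivAt (fun v : ℝ => v * (v ^ 2 + 3) / (2 * v ^ 2 + 3) - Real.arctan v)
      (((1 * (z ^ 2 + 3) + z * (2 * z ^ 1)) * (2 * z ^ 2 + 3) - z * (z ^ 2 + 3) * (2 * (2 * z ^ 1)))
        / (2 * z ^ 2 + 3) ^ 2 - 1 / (1 + z ^ 2)) z := by
    intro z
    have h1 : HasDerivAt (fun v : ℝ => v * (v ^ 2 + 3)) (1 * (z ^ 2 + 3) + z * (2 * z ^ 1)) z :=
      (hasDerivAt_id z).mul ((hasDerivAt_pow 2 z).add_const 3)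
    have h2 : HasDerivAt (fun v : ℝ => 2 * v ^ 2 + 3) (2 * (2 * z ^ 1)) z :=
      ((hasDerivAt_pow 2 z).const_mul 2).add_const 3
    have hne : (2 * z ^ 2 + 3 : ℝ) ≠ 0 := by positivity
    exact (h1.div h2 hne).sub (Real.hasDerivAt_arctan z)
  have hmono : Monotone (fun v : ℝ => v * (v ^ 2 + 3) / (2 * v ^ 2 + 3) - Real.arctan v) := by
    apply monotone_of_deriv_nonneg
    · exact fun z => (key z).differentiableAt
    · intro z
      rw [(key z).deriv]
      rw [sub_nonneg, div_le_div_iff₀ (by positivity) (by positivity)]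
      nlinarith [sq_nonneg (z ^ 3), sq_nonneg (z ^ 2), sq_nonneg z]
  have h0 := hmono hv
  simp only [Real.arctan_zero, zero_mul, zero_div, sub_zero, zero_sub, neg_nonpos] at h0
  linarith [h0]

/-- `Lf = ((f')² − 1)/f'' − f − ∂f/∂t ≥ 0` on `(0, π]` for all `t`. -/
theorem stmt_0 (t x : ℝ) (hx : x ∈ Set.Ioc 0 Real.pi) :
    ((deriv (fun y => compFun y t) x) ^ 2 - 1) /
        (deriv (deriv (fun y => compFun y t)) x)
      - compFun x t - deriv (fun s => compFun x s) t ≥ 0 := by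
  obtain ⟨hx0, hxpi⟩ := hx
  have hpi := Real.pi_pos
  have he : Real.exp t ≠ 0 := Real.exp_ne_zero t
  have ha : (0:ℝ) < Real.exp (-t) := Real.exp_pos _
  have hs : 0 < Real.sin (x / 2) :=
    Real.sin_pos_of_pos_of_lt_pi (by linarith) (by linarith)
  have hc : 0 ≤ Real.cos (x / 2) := Real.cos_nonneg_of_mem_Icc ⟨by linarith, by linarith⟩
  have hpyth : Real.sin (x / 2) ^ 2 + Real.cos (x / 2) ^ 2 = 1 := Real.sin_sq_add_cos_sq _
  have hDpos : (0:ℝ) < 1 + (Real.exp (-t) * Real.sin (x / 2)) ^ 2 := by positivity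
  have hDne : (1 + (Real.exp (-t) * Real.sin (x / 2)) ^ 2 : ℝ) ≠ 0 := ne_of_gt hDpos
  -- first derivative in x
  have hsin : ∀ y : ℝ, HasDerivAt (fun y : ℝ => Real.exp (-t) * Real.sin (y / 2))
      (Real.exp (-t) * (Real.cos (y / 2) * (1 / 2))) y := fun y =>
    (((hasDerivAt_id y).div_const 2).sin).const_mul _
  have hd1 : ∀ y : ℝ, HasDerivAt (fun y => compFun y t)
      (2 * Real.exp t * (1 / (1 + (Real.exp (-t) * Real.sin (y / 2)) ^ 2) *
        (Real.exp (-t) * (Real.cos (y / 2) * (1 / 2))))) y := fun y =>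
    ((hsin y).arctan).const_mul _
  have e1 : deriv (fun y => compFun y t)
      = fun y => Real.cos (y / 2) / (1 + (Real.exp (-t) * Real.sin (y / 2)) ^ 2) := by
    funext y
    rw [(hd1 y).deriv, Real.exp_neg]
    field_simp
  -- second derivative in x
  have hcos : HasDerivAt (fun y : ℝ => Real.cos (y / 2)) (-Real.sin (x / 2) * (1 / 2)) x :=
    ((hasDerivAt_id x).div_const 2).cos
  have hden : HasDerivAt (fun y : ℝ => 1 + (Real.exp (-t) * Real.sin (y / 2)) ^ 2)
      ((2:ℕ) * (Real.exp (-t) * Real.sin (x / 2)) ^ 1 *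
        (Real.exp (-t) * (Real.cos (x / 2) * (1 / 2)))) x :=
    ((hsin x).pow 2).const_add 1
  have hd2 : HasDerivAt (fun y : ℝ =>
      Real.cos (y / 2) / (1 + (Real.exp (-t) * Real.sin (y / 2)) ^ 2))
      ((-Real.sin (x / 2) * (1 / 2) * (1 + (Real.exp (-t) * Real.sin (x / 2)) ^ 2)
        - Real.cos (x / 2) * ((2:ℕ) * (Real.exp (-t) * Real.sin (x / 2)) ^ 1 *
          (Real.exp (-t) * (Real.cos (x / 2) * (1 / 2)))))
        / (1 + (Real.exp (-t) * Real.sin (x / 2)) ^ 2) ^ 2) x :=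
    hcos.div hden hDne
  have e2 : deriv (deriv (fun y => compFun y t)) x
      = (-(Real.sin (x / 2) * (1 + (Real.exp (-t) * Real.sin (x / 2)) ^ 2
            + 2 * Real.exp (-t) ^ 2 * Real.cos (x / 2) ^ 2) / 2))
        / (1 + (Real.exp (-t) * Real.sin (x / 2)) ^ 2) ^ 2 := by
    rw [e1, hd2.deriv]
    rw [div_eq_div_iff (by positivity) (by positivity)]
    push_cast
    ring
  -- derivative in t
  have hdt : HasDerivAt (fun u => compFun x u)
      (2 * Real.exp t * Real.arctan (Real.exp (-t) * Real.sin (x / 2))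
        + 2 * Real.exp t * (1 / (1 + (Real.exp (-t) * Real.sin (x / 2)) ^ 2) *
          (Real.exp (-t) * -1 * Real.sin (x / 2)))) t := by
    have hi : HasDerivAt (fun u : ℝ => Real.exp (-u) * Real.sin (x / 2))
        (Real.exp (-t) * -1 * Real.sin (x / 2)) t :=
      (((hasDerivAt_id t).neg).exp).mul_const _
    have ho : HasDerivAt (fun u : ℝ => 2 * Real.exp u) (2 * Real.exp t) t :=
      (Real.hasDerivAt_exp t).const_mul 2
    exact ho.mul hi.arctan
  have et : deriv (fun u => compFun x u) t
      = 2 * Real.exp t * Real.arctan (Real.exp (-t) * Real.sin (x / 2))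
        - 2 * Real.sin (x / 2) / (1 + (Real.exp (-t) * Real.sin (x / 2)) ^ 2) := by
    rw [hdt.deriv]
    have h1 : 2 * Real.exp t * (1 / (1 + (Real.exp (-t) * Real.sin (x / 2)) ^ 2) *
        (Real.exp (-t) * -1 * Real.sin (x / 2)))
        = -(2 * Real.sin (x / 2) / (1 + (Real.exp (-t) * Real.sin (x / 2)) ^ 2)) := by
      rw [Real.exp_neg]
      field_simp
    rw [h1]; ring
  rw [(hd1 x).deriv, e2, et]
  have efst : 2 * Real.exp t * (1 / (1 + (Real.exp (-t) * Real.sin (x / 2)) ^ 2) *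
      (Real.exp (-t) * (Real.cos (x / 2) * (1 / 2))))
      = Real.cos (x / 2) / (1 + (Real.exp (-t) * Real.sin (x / 2)) ^ 2) := by
    rw [Real.exp_neg]
    field_simp
  rw [efst]
  have hcf : compFun x t = 2 * Real.exp t * Real.arctan (Real.exp (-t) * Real.sin (x / 2)) := rfl
  rw [hcf]
  -- bound the arctan terms
  have hexp1 : Real.exp t * Real.exp (-t) = 1 := by rw [← Real.exp_add]; simp
  have hb : 2 * Real.exp t * Real.arctan (Real.exp (-t) * Real.sin (x / 2))
      ≤ 2 * Real.sin (x / 2) * ((Real.exp (-t) * Real.sin (x / 2)) ^ 2 + 3)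
        / (2 * (Real.exp (-t) * Real.sin (x / 2)) ^ 2 + 3) := by
    have h1 := arctan_pade (Real.exp (-t) * Real.sin (x / 2)) (by positivity)
    have h2 : 2 * Real.exp t * ((Real.exp (-t) * Real.sin (x / 2))
          * ((Real.exp (-t) * Real.sin (x / 2)) ^ 2 + 3)
        / (2 * (Real.exp (-t) * Real.sin (x / 2)) ^ 2 + 3))
        = 2 * Real.sin (x / 2) * ((Real.exp (-t) * Real.sin (x / 2)) ^ 2 + 3)
          / (2 * (Real.exp (-t) * Real.sin (x / 2)) ^ 2 + 3) := by
      rw [Real.exp_neg]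
      field_simp
    nlinarith [Real.exp_pos t, h1, h2]
  -- first fraction closed form
  have hEpos : (0:ℝ) < 1 + (Real.exp (-t) * Real.sin (x / 2)) ^ 2
      + 2 * Real.exp (-t) ^ 2 * Real.cos (x / 2) ^ 2 := by positivity
  have hYpos : (0:ℝ) < 2 * (Real.exp (-t) * Real.sin (x / 2)) ^ 2 + 3 := by positivity
  have hfrac : ((Real.cos (x / 2) / (1 + (Real.exp (-t) * Real.sin (x / 2)) ^ 2)) ^ 2 - 1)
      / ((-(Real.sin (x / 2) * (1 + (Real.exp (-t) * Real.sin (x / 2)) ^ 2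
            + 2 * Real.exp (-t) ^ 2 * Real.cos (x / 2) ^ 2) / 2))
        / (1 + (Real.exp (-t) * Real.sin (x / 2)) ^ 2) ^ 2)
      = 2 * ((1 + (Real.exp (-t) * Real.sin (x / 2)) ^ 2) ^ 2 - Real.cos (x / 2) ^ 2)
        / (Real.sin (x / 2) * (1 + (Real.exp (-t) * Real.sin (x / 2)) ^ 2
            + 2 * Real.exp (-t) ^ 2 * Real.cos (x / 2) ^ 2)) := by
    have hsE : 0 < Real.sin (x / 2) * (1 + (Real.exp (-t) * Real.sin (x / 2)) ^ 2
            + 2 * Real.exp (-t) ^ 2 * Real.cos (x / 2) ^ 2) := mul_pos hs hEpos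
    have hne2 : (-(Real.sin (x / 2) * (1 + (Real.exp (-t) * Real.sin (x / 2)) ^ 2
            + 2 * Real.exp (-t) ^ 2 * Real.cos (x / 2) ^ 2) / 2))
        / (1 + (Real.exp (-t) * Real.sin (x / 2)) ^ 2) ^ 2 ≠ 0 :=
      ne_of_lt (div_neg_of_neg_of_pos (by linarith) (pow_pos hDpos 2))
    rw [div_eq_iff hne2]
    field_simp
    ring
  rw [hfrac]
  -- final polynomial inequality
  have hkey : 0 ≤ 2 * ((1 + (Real.exp (-t) * Real.sin (x / 2)) ^ 2) ^ 2 - Real.cos (x / 2) ^ 2)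
        / (Real.sin (x / 2) * (1 + (Real.exp (-t) * Real.sin (x / 2)) ^ 2
            + 2 * Real.exp (-t) ^ 2 * Real.cos (x / 2) ^ 2))
      + 2 * Real.sin (x / 2) / (1 + (Real.exp (-t) * Real.sin (x / 2)) ^ 2)
      - 2 * (2 * Real.sin (x / 2) * ((Real.exp (-t) * Real.sin (x / 2)) ^ 2 + 3)
        / (2 * (Real.exp (-t) * Real.sin (x / 2)) ^ 2 + 3)) := by
    set A := Real.exp (-t) with hA_def
    set S := Real.sin (x / 2) with hS_def
    set C := Real.cos (x / 2) with hC_def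
    have hNN : 2 * ((1 + (A * S) ^ 2) ^ 2 - C ^ 2)
        / (S * (1 + (A * S) ^ 2 + 2 * A ^ 2 * C ^ 2))
        + 2 * S / (1 + (A * S) ^ 2)
        - 2 * (2 * S * ((A * S) ^ 2 + 3) / (2 * (A * S) ^ 2 + 3))
        = (2 * ((1 + (A * S) ^ 2) ^ 2 - C ^ 2) * (1 + (A * S) ^ 2) * (2 * (A * S) ^ 2 + 3)
            + 2 * S ^ 2 * (1 + (A * S) ^ 2 + 2 * A ^ 2 * C ^ 2) * (2 * (A * S) ^ 2 + 3)
            - 4 * S ^ 2 * ((A * S) ^ 2 + 3) * (1 + (A * S) ^ 2 + 2 * A ^ 2 * C ^ 2)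
              * (1 + (A * S) ^ 2))
          / (S * (1 + (A * S) ^ 2 + 2 * A ^ 2 * C ^ 2) * (1 + (A * S) ^ 2)
              * (2 * (A * S) ^ 2 + 3)) := by
      have hS0 : S ≠ 0 := ne_of_gt hs
      have hE0 : (1 + (A * S) ^ 2 + 2 * A ^ 2 * C ^ 2 : ℝ) ≠ 0 := ne_of_gt hEpos
      field_simp
      ring
    rw [hNN]
    apply div_nonneg _ (by positivity)
    have hz : C ^ 2 = 1 - S ^ 2 := by linarith
    have hP : 2 * ((1 + (A * S) ^ 2) ^ 2 - C ^ 2) * (1 + (A * S) ^ 2) * (2 * (A * S) ^ 2 + 3)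
            + 2 * S ^ 2 * (1 + (A * S) ^ 2 + 2 * A ^ 2 * C ^ 2) * (2 * (A * S) ^ 2 + 3)
            - 4 * S ^ 2 * ((A * S) ^ 2 + 3) * (1 + (A * S) ^ 2 + 2 * A ^ 2 * C ^ 2)
              * (1 + (A * S) ^ 2)
        = 2 * ((A ^ 2 * S ^ 2) ^ 2 + 2 * (A ^ 2 * S ^ 2) * S ^ 2
            + 6 * (A ^ 2 * S ^ 2) ^ 2 * S ^ 2 + 5 * (A ^ 2 * S ^ 2) ^ 3
            + 2 * (A ^ 2 * S ^ 2) ^ 3 * S ^ 2 + 2 * (A ^ 2 * S ^ 2) ^ 4) := by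
      linear_combination (-(6 + 22 * (A ^ 2 * S ^ 2) + 28 * (A ^ 2 * S ^ 2) ^ 2
        + 8 * (A ^ 2 * S ^ 2) ^ 3)) * hz
    rw [hP]
    positivity
  linarith [hkey, hb]
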